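/- Let 𝒰 be a neighborhood base at the identity 0 of a paratopological gyrogroup G such that gyr[x,y](U) = U for every U ∈ 𝒰 and all x, y ∈ G (i.e., 𝒰 witnesses that G is a strongly paratopological gyrogroup). If U, V, W ∈ 𝒰 and U⊕V ⊆ W, then (⊖V)⊕(⊖U) ⊆ ⊖W, where A⊕B = {a⊕b : a ∈ A, b ∈ B} and ⊖A = {⊖a : a ∈ A}. -/
import Mathlib


/-- A gyrogroup: a groupoid with identity, inverses, gyroautomorphisms satisfying the
left gyroassociative law and the left loop property. -/
class Gyrogroup (G : Type*) extends Zero G, Add G, Neg G where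
  gyr : G → G → G → G
  zero_add : ∀ x : G, 0 + x = x
  add_zero : ∀ x : G, x + 0 = x
  neg_add_cancel : ∀ x : G, -x + x = 0
  add_neg_cancel : ∀ x : G, x + -x = 0
  gyr_bijective : ∀ x y : G, Function.Bijective (gyr x y)
  gyr_add : ∀ x y a b : G, gyr x y (a + b) = gyr x y a + gyr x y b
  add_gyr_assoc : ∀ x y z : G, x + (y + z) = (x + y) + gyr x y z
  gyr_left_loop : ∀ x y : G, gyr (x + y) y = gyr x y

open Gyrogroup

/-- `𝒰` is a neighborhood base at the point `x`. -/
def IsNhdsBasisAt {G : Type*} [TopologicalSpace G] (x : G) (𝒰 : Set (Set G)) : Prop :=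
  (∀ U ∈ 𝒰, U ∈ nhds x) ∧ ∀ V ∈ nhds x, ∃ U ∈ 𝒰, U ⊆ V

/-- Every member of `𝒰` is invariant under all gyroautomorphisms: this is the witness that
a paratopological gyrogroup is *strongly* paratopological when `𝒰` is a nbhd base at `0`. -/
def GyrInvariantBase {G : Type*} [Gyrogroup G] (𝒰 : Set (Set G)) : Prop :=
  ∀ U ∈ 𝒰, ∀ x y : G, gyr x y '' U = U

namespace GyroAux

variable {G : Type*} [Gyrogroup G]

lemma add_left_injective (a : G) : Function.Injective (fun z : G => a + z) := by
  intro z1 z2 h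
  have key : ∀ z : G, -a + (a + z) = gyr (-a) a z := fun z => by
    rw [add_gyr_assoc, Gyrogroup.neg_add_cancel, Gyrogroup.zero_add]
  have h2 : gyr (-a) a z1 = gyr (-a) a z2 := by
    rw [← key, ← key]
    simp only at h
    rw [h]
  exact (gyr_bijective (-a) a).1 h2

lemma neg_unique {a b : G} (h : a + b = 0) : b = -a :=
  add_left_injective a (by simp only; rw [h, Gyrogroup.add_neg_cancel])

lemma neg_neg' (a : G) : -(-a) = a :=
  (neg_unique (Gyrogroup.neg_add_cancel a)).symm

lemma gyr_zero_left (a z : G) : gyr (0 : G) a z = z := by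
  have h : a + z = a + gyr 0 a z := by
    have := add_gyr_assoc (0 : G) a z
    rwa [Gyrogroup.zero_add, Gyrogroup.zero_add] at this
  exact (add_left_injective a h).symm

lemma gyr_neg_self (a : G) : ∀ z : G, gyr (-a) a z = z := by
  intro z
  have := gyr_left_loop (-a) a
  rw [Gyrogroup.neg_add_cancel] at this
  rw [← this, gyr_zero_left]

lemma left_cancel (a b : G) : -a + (a + b) = b := by
  rw [add_gyr_assoc, Gyrogroup.neg_add_cancel, Gyrogroup.zero_add, gyr_neg_self]

lemma left_cancel' (a b : G) : a + (-a + b) = b := by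
  have := left_cancel (-a) b
  rwa [neg_neg'] at this

lemma gyr_zero (x y : G) : gyr x y (0 : G) = 0 := by
  have h : gyr x y (0 : G) = gyr x y 0 + gyr x y 0 := by
    rw [← gyr_add, Gyrogroup.add_zero]
  have h2 : gyr x y (0:G) + gyr x y 0 = gyr x y 0 + 0 := by rw [← h, Gyrogroup.add_zero]
  exact add_left_injective _ h2

lemma gyr_neg (x y a : G) : gyr x y (-a) = -(gyr x y a) := by
  refine neg_unique ?_
  rw [← gyr_add, Gyrogroup.add_neg_cancel, gyr_zero]

lemma neg_add_rev (a b : G) : -(a + b) = gyr a b (-b + -a) := by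
  refine (neg_unique ?_).symm
  rw [← add_gyr_assoc, left_cancel', Gyrogroup.add_neg_cancel]

end GyroAux

/-- If `𝒰` witnesses that `G` is a strongly paratopological gyrogroup and
`U, V, W ∈ 𝒰` satisfy `U⊕V ⊆ W`, then `(⊖V)⊕(⊖U) ⊆ ⊖W`. -/
theorem neg_add_neg_subset_of_strong_base
    {G : Type*} [Gyrogroup G] [TopologicalSpace G]
    (hadd : Continuous fun p : G × G => p.1 + p.2)
    (𝒰 : Set (Set G)) (hbase : IsNhdsBasisAt (0 : G) 𝒰) (hstrong : GyrInvariantBase 𝒰) :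
    ∀ U ∈ 𝒰, ∀ V ∈ 𝒰, ∀ W ∈ 𝒰,
      Set.image2 (fun u v => u + v) U V ⊆ W →
      Set.image2 (fun u v => u + v) ((fun v => -v) '' V) ((fun u => -u) '' U)
        ⊆ (fun w => -w) '' W := by
  intro U hU V hV W hW hsub
  rintro x hx
  rw [Set.mem_image2] at hx
  obtain ⟨nv, ⟨v, hv, rfl⟩, nu, ⟨u, hu, rfl⟩, rfl⟩ := hx
  have hw : u + v ∈ W := hsub (Set.mem_image2_of_mem hu hv)
  -- -(u+v) ∈ W after applying gyr u v to (-v + -u)... use invariance of W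
  -- gyr u v (-v + -u) = -(u+v); W is gyr-invariant, so ∃ w' ∈ W, gyr u v w' = u + v? 
  -- Instead: since gyr u v '' W = W, u + v ∈ gyr u v '' W, so ∃ s ∈ W, gyr u v s = u + v.
  have hinv := hstrong W hW u v
  have : u + v ∈ gyr u v '' W := by rw [hinv]; exact hw
  obtain ⟨s, hs, hgs⟩ := this
  refine ⟨s, hs, ?_⟩
  -- We have gyr u v s = u + v, and -(u+v) = gyr u v (-v + -u) = gyr u v (-s) hence -v+-u = -s.
  have h1 : gyr u v (-s) = gyr u v (-v + -u) := by
    rw [GyroAux.gyr_neg, hgs, GyroAux.neg_add_rev]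
  exact (gyr_bijective u v).1 h1
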